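/- Let (B, g_B, ψ) be a complete Ricci-Hessian type manifold satisfying Eq. (SuffCondition2) with λ > 0 and μ ≤ 0. If |∇ln f| ∈ L^∞(B), a contradiction arises: from Δ_ψ|∇ln f|² ≥ 2λ|∇ln f|² ≥ 0 and the weak maximum principle at infinity one gets λ·sup|∇ln f|² = 0, forcing f constant, which is impossible. Hence no such manifold exists with |∇ln f| bounded. -/

import Mathlib

/-- There is no complete Ricci-Hessian type manifold
`(B, g_B, ψ)` satisfying SuffCondition2 with `λ > 0`, `μ ≤ 0` and
`|∇ln f| ∈ L^∞(B)`: from `Δ_ψ|∇ln f|² ≥ 2λ|∇ln f|²` and the weak maximum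
principle at infinity one gets `λ·sup|∇ln f|² = 0`, forcing `f` constant,
which is impossible when `λ > 0` and `μ ≤ 0`.

Encoding as before; `hBochner_log` is the Bochner-type identity of Lemma 4(2),
`hΔψ_log` the identity `Δ_ψ(ln f) = (μ - λf²)/f²`, `hWMP` the weak maximum
principle at infinity for `Δ_ψ`, `hGradZero` the fact that `∇ln f ≡ 0` forces
`f` constant. -/
theorem no_ricci_hessian_type_shrinking_with_bounded_grad_log
    (B : Type*) [Nonempty B] (T : Type*) [AddCommGroup T] [Module (B → ℝ) T]
    (Ric gB : T) (hess : (B → ℝ) → T)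
    (Δ : (B → ℝ) → (B → ℝ)) (G : (B → ℝ) → (B → ℝ) → (B → ℝ))
    (H2 : (B → ℝ) → (B → ℝ))
    (f φ ψ : B → ℝ) (m : ℕ) (hm : 0 < m) (lam c mu : ℝ) (hf : ∀ x, 0 < f x)
    (hψ : ψ = fun x => φ x - (m : ℝ) * Real.log (f x))
    (hRicciHessianType :
      Ric + hess φ - (fun x => (m : ℝ) / f x) • hess f = (fun _ : B => lam) • gB)
    (hSuffCondition2 : ∀ x,
      2 * lam * φ x - G φ φ x + Δ φ x + ((m : ℝ) / f x) * G φ f x = c)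
    (hSuffCondition3 : ∀ x,
      lam * (f x) ^ 2 + f x * Δ f x + ((m : ℝ) - 1) * G f f x
        - f x * G φ f x = mu)
    (hlam : 0 < lam) (hmu : mu ≤ 0)
    (hBochner_log : ∀ x,
      (1 / 2) * (Δ (G (fun y => Real.log (f y)) (fun y => Real.log (f y))) x
              - G ψ (G (fun y => Real.log (f y)) (fun y => Real.log (f y))) x)
        = H2 (fun y => Real.log (f y)) x
            - (2 * mu / (f x) ^ 2)
                * G (fun y => Real.log (f y)) (fun y => Real.log (f y)) x
            + lam * G (fun y => Real.log (f y)) (fun y => Real.log (f y)) x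
            + ((m : ℝ) / (f x) ^ 2)
                * (G (fun y => Real.log (f y)) f x) ^ 2)
    (hH2_nonneg : ∀ x, 0 ≤ H2 (fun y => Real.log (f y)) x)
    (hG_nonneg : ∀ x,
      0 ≤ G (fun y => Real.log (f y)) (fun y => Real.log (f y)) x)
    (hΔψ_log : ∀ x,
      Δ (fun y => Real.log (f y)) x - G ψ (fun y => Real.log (f y)) x
        = (mu - lam * (f x) ^ 2) / (f x) ^ 2)
    (hbounded : BddAbove
      (Set.range (G (fun y => Real.log (f y)) (fun y => Real.log (f y)))))
    (hWMP : ∀ u : B → ℝ, BddAbove (Set.range u) →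
      ∀ ε : ℝ, 0 < ε → ∃ x, (⨆ y, u y) - ε ≤ u x ∧ Δ u x - G ψ u x ≤ ε)
    (hGradZero :
      (∀ x, G (fun y => Real.log (f y)) (fun y => Real.log (f y)) x = 0) →
      ∃ k : ℝ, ∀ x, f x = k)
    (hΔ_const : ∀ a : ℝ, ∀ x, Δ (fun _ => a) x = 0)
    (hG_const : ∀ (a : ℝ) (v : B → ℝ) (x : B), G v (fun _ => a) x = 0) :
    False := by
  set u : B → ℝ := G (fun y => Real.log (f y)) (fun y => Real.log (f y)) with hu
  -- Step 1: sup u ≤ 0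
  have hsup_le : ∀ ε : ℝ, 0 < ε → (⨆ y, u y) ≤ ε + ε / (2 * lam) := by
    intro ε hε
    obtain ⟨x, hx1, hx2⟩ := hWMP u hbounded ε hε
    have hB := hBochner_log x
    have hdrop : lam * u x ≤ (1 / 2) * (Δ u x - G ψ u x) := by
      rw [hB]
      have h1 : 0 ≤ H2 (fun y => Real.log (f y)) x := hH2_nonneg x
      have h2 : 0 ≤ -(2 * mu / (f x) ^ 2) * u x := by
        apply mul_nonneg
        · have : 0 < (f x) ^ 2 := pow_pos (hf x) 2
          have : 0 ≤ -(2 * mu) / (f x) ^ 2 := div_nonneg (by linarith) this.le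
          simpa [neg_div] using this
        · exact hG_nonneg x
      have h3 : 0 ≤ ((m : ℝ) / (f x) ^ 2) * (G (fun y => Real.log (f y)) f x) ^ 2 :=
        mul_nonneg (div_nonneg (Nat.cast_nonneg m) (pow_pos (hf x) 2).le) (sq_nonneg _)
      nlinarith [hG_nonneg x]
    have hux : u x ≤ ε / (2 * lam) := by
      have h2l : 0 < 2 * lam := by linarith
      rw [le_div_iff₀ h2l]
      nlinarith
    linarith
  have hsup0 : (⨆ y, u y) ≤ 0 := by
    by_contra h
    push_neg at h
    set s := (⨆ y, u y) with hs
    have h2l : 0 < 2 * lam := by linarith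
    have hε : 0 < s * lam / (2 * lam + 1) := by positivity
    have hle := hsup_le _ hε
    have heq : s * lam / (2 * lam + 1) + s * lam / (2 * lam + 1) / (2 * lam) = s / 2 := by
      field_simp
    rw [heq] at hle
    linarith
  -- Step 2: u ≡ 0
  have huzero : ∀ x, u x = 0 := by
    intro x
    have h1 := hG_nonneg x
    have h2 : u x ≤ ⨆ y, u y := le_ciSup hbounded x
    have := h2.trans hsup0
    linarith
  -- Step 3: f constant
  obtain ⟨k, hk⟩ := hGradZero huzero
  have hkpos : 0 < k := hk (Classical.arbitrary B) ▸ hf (Classical.arbitrary B)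
  have hfc : (fun y => Real.log (f y)) = (fun _ : B => Real.log k) := by
    funext y; rw [hk y]
  obtain x₀ := Classical.arbitrary B
  have h := hΔψ_log x₀
  rw [hfc, hΔ_const, hG_const, hk x₀] at h
  have hk2 : 0 < k ^ 2 := pow_pos hkpos 2
  have : mu - lam * k ^ 2 = 0 := by
    field_simp at h
    linarith
  nlinarith
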